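/- Let q, a, b, c, d ∈ ℝ³ satisfy: ‖a‖ = ‖b‖ ≠ 0, a·b = 0, ‖c‖ = ‖d‖ ≠ 0, c·d = 0, q·a = q·b = q·c = q·d = 0, ‖q‖² = 2 (a·c + b·d), and a·d − b·c = 0. Then the linear span of {a,b} equals the linear span of {c,d}. -/

import Mathlib

open scoped RealInnerProductSpace
open Module

section aux
variable {E : Type*} [NormedAddCommGroup E] [InnerProductSpace ℝ E]

lemma aux_li {a b : E} (ha : ‖a‖ ≠ 0) (hab : ‖a‖ = ‖b‖) (h : ⟪a, b⟫ = 0) :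
    LinearIndependent ℝ ![a, b] := by
  rw [LinearIndependent.pair_iff]
  intro s t hst
  have haa : ⟪a, a⟫ ≠ 0 := by
    rw [real_inner_self_eq_norm_sq]; exact pow_ne_zero 2 ha
  have hbb : ⟪b, b⟫ ≠ 0 := by
    rw [real_inner_self_eq_norm_sq, ← hab]; exact pow_ne_zero 2 ha
  have h1 : s * ⟪a, a⟫ = 0 := by
    have := congrArg (fun v => ⟪a, v⟫) hst
    simpa [inner_add_right, real_inner_smul_right, h] using this
  have hba : ⟪b, a⟫ = 0 := by rw [real_inner_comm]; exact h
  have h2 : t * ⟪b, b⟫ = 0 := by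
    have := congrArg (fun v => ⟪b, v⟫) hst
    simpa [inner_add_right, real_inner_smul_right, hba] using this
  exact ⟨(mul_eq_zero.mp h1).resolve_right haa, (mul_eq_zero.mp h2).resolve_right hbb⟩

lemma aux_rank {a b : E} (ha : ‖a‖ ≠ 0) (hab : ‖a‖ = ‖b‖) (h : ⟪a, b⟫ = 0) :
    finrank ℝ (Submodule.span ℝ ({a, b} : Set E)) = 2 := by
  have h1 := finrank_span_eq_card (aux_li ha hab h)
  have h2 : Set.range ![a, b] = {a, b} := by
    ext z
    simp [Fin.exists_fin_two, or_comm]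
  rw [h2] at h1
  simpa using h1

end aux

/-- Corollary 1.6, first assertion: under the conformal neck relations in `ℝ³`,
the plane spanned by `(a,b)` coincides with the plane spanned by `(c,d)`. -/
theorem neck_planes_coincide
    (q a b c d : EuclideanSpace ℝ (Fin 3))
    (hab : ‖a‖ = ‖b‖) (ha : ‖a‖ ≠ 0) (habo : ⟪a, b⟫ = 0)
    (hcd : ‖c‖ = ‖d‖) (hc : ‖c‖ ≠ 0) (hcdo : ⟪c, d⟫ = 0)
    (hqa : ⟪q, a⟫ = 0) (hqb : ⟪q, b⟫ = 0) (hqc : ⟪q, c⟫ = 0) (hqd : ⟪q, d⟫ = 0)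
    (hq : ‖q‖ ^ 2 = 2 * (⟪a, c⟫ + ⟪b, d⟫))
    (hdet : ⟪a, d⟫ - ⟪b, c⟫ = 0) :
    Submodule.span ℝ {a, b} = Submodule.span ℝ {c, d} := by
  classical
  set x := (⟪a, c⟫ : ℝ) with hx
  set y := (⟪b, c⟫ : ℝ) with hy
  set v := (⟪b, d⟫ : ℝ) with hv
  have hu : ⟪a, d⟫ = y := by rw [hy]; linarith [hdet]
  set r2 := ‖a‖ ^ 2 with hr2
  have hr2ne : r2 ≠ 0 := pow_ne_zero 2 ha
  have haa : ⟪a, a⟫ = r2 := real_inner_self_eq_norm_sq a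
  have hbb : ⟪b, b⟫ = r2 := by rw [real_inner_self_eq_norm_sq, ← hab]
  have hba : ⟪b, a⟫ = 0 := by rw [real_inner_comm]; exact habo
  set S := Submodule.span ℝ ({a, b} : Set (EuclideanSpace ℝ (Fin 3))) with hS
  have haS : a ∈ S := Submodule.subset_span (Set.mem_insert _ _)
  have hbS : b ∈ S := Submodule.subset_span (Set.mem_insert_of_mem _ rfl)
  set c' := c - (x / r2) • a - (y / r2) • b with hc'def
  set d' := d - (y / r2) • a - (v / r2) • b with hd'def
  have hac' : ⟪a, c'⟫ = 0 := by
    rw [hc'def]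
    simp only [inner_sub_right, real_inner_smul_right, habo, haa, ← hx]
    field_simp
    ring
  have hbc' : ⟪b, c'⟫ = 0 := by
    rw [hc'def]
    simp only [inner_sub_right, real_inner_smul_right, hba, hbb, ← hy]
    field_simp
    ring
  have had' : ⟪a, d'⟫ = 0 := by
    rw [hd'def]
    simp only [inner_sub_right, real_inner_smul_right, habo, haa, hu]
    field_simp
    ring
  have hbd' : ⟪b, d'⟫ = 0 := by
    rw [hd'def]
    simp only [inner_sub_right, real_inner_smul_right, hba, hbb, ← hv]
    field_simp
    ring
  have memW : ∀ w : EuclideanSpace ℝ (Fin 3), ⟪a, w⟫ = 0 → ⟪b, w⟫ = 0 → w ∈ Sᗮ := by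
    intro w hwa hwb
    rw [Submodule.mem_orthogonal]
    intro u hu'
    induction hu' using Submodule.span_induction with
    | mem z hz =>
      rcases hz with rfl | rfl
      · exact hwa
      · exact hwb
    | zero => simp
    | add u₁ u₂ _ _ h1 h2 => rw [inner_add_left, h1, h2]; ring
    | smul t u₁ _ h1 => rw [real_inner_smul_left, h1]; ring
  have hc'W : c' ∈ Sᗮ := memW c' hac' hbc'
  have hd'W : d' ∈ Sᗮ := memW d' had' hbd'
  have hdim : finrank ℝ S = 2 := aux_rank ha hab habo
  have hWdim : finrank ℝ Sᗮ = 1 := by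
    have h3 : finrank ℝ (EuclideanSpace ℝ (Fin 3)) = 3 := by simp
    have h4 := Submodule.finrank_add_finrank_orthogonal S
    omega
  obtain ⟨e, he0, hgen⟩ := finrank_eq_one_iff'.mp hWdim
  have heE : ((e : EuclideanSpace ℝ (Fin 3))) ≠ 0 := fun h => he0 (Subtype.ext h)
  have hee : ⟪(e : EuclideanSpace ℝ (Fin 3)), (e : EuclideanSpace ℝ (Fin 3))⟫ ≠ 0 := by
    rw [real_inner_self_eq_norm_sq]
    exact pow_ne_zero 2 (norm_ne_zero_iff.mpr heE)
  obtain ⟨α, hα⟩ := hgen ⟨c', hc'W⟩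
  obtain ⟨β, hβ⟩ := hgen ⟨d', hd'W⟩
  have hαE : c' = α • (e : EuclideanSpace ℝ (Fin 3)) := by
    have := congrArg Subtype.val hα
    simpa using this.symm
  have hβE : d' = β • (e : EuclideanSpace ℝ (Fin 3)) := by
    have := congrArg Subtype.val hβ
    simpa using this.symm
  have hc'a : ⟪c', a⟫ = 0 := by rw [real_inner_comm]; exact hac'
  have hc'b : ⟪c', b⟫ = 0 := by rw [real_inner_comm]; exact hbc'
  have hd'a : ⟪d', a⟫ = 0 := by rw [real_inner_comm]; exact had'
  have hd'b : ⟪d', b⟫ = 0 := by rw [real_inner_comm]; exact hbd'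
  -- key inner product computations
  have hc'd : ⟪c', d⟫ = -(x * y + y * v) / r2 := by
    rw [hc'def]
    simp only [inner_sub_left, real_inner_smul_left, hu, hcdo, ← hv]
    field_simp
    ring
  have hc'd' : ⟪c', d'⟫ = -(x * y + y * v) / r2 := by
    rw [hd'def]
    rw [inner_sub_right, inner_sub_right, real_inner_smul_right, real_inner_smul_right,
      hc'a, hc'b, hc'd]
    ring
  have hc'c : ⟪c', c⟫ = ‖c‖ ^ 2 - (x ^ 2 + y ^ 2) / r2 := by
    rw [hc'def]
    simp only [inner_sub_left, real_inner_smul_left, real_inner_comm a c, real_inner_comm b c,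
      real_inner_self_eq_norm_sq, ← hx, ← hy]
    field_simp
    ring
  have hd'd : ⟪d', d⟫ = ‖d‖ ^ 2 - (y ^ 2 + v ^ 2) / r2 := by
    rw [hd'def]
    simp only [inner_sub_left, real_inner_smul_left, real_inner_comm a d, real_inner_comm b d,
      real_inner_self_eq_norm_sq, hu, ← hv]
    field_simp
    ring
  have hc'c' : ⟪c', c'⟫ = ‖c‖ ^ 2 - (x ^ 2 + y ^ 2) / r2 := by
    nth_rewrite 2 [hc'def]
    rw [inner_sub_right, inner_sub_right, real_inner_smul_right, real_inner_smul_right,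
      hc'a, hc'b, hc'c]
    ring
  have hd'd' : ⟪d', d'⟫ = ‖d‖ ^ 2 - (y ^ 2 + v ^ 2) / r2 := by
    nth_rewrite 2 [hd'def]
    rw [inner_sub_right, inner_sub_right, real_inner_smul_right, real_inner_smul_right,
      hd'a, hd'b, hd'd]
    ring
  -- show c' = 0 and d' = 0
  have hc'0 : c' = 0 ∧ d' = 0 := by
    by_cases hq0 : q = 0
    · -- degenerate case: x + v = 0
      have hxv : x + v = 0 := by
        rw [hq0] at hq
        simp at hq
        linarith
      have h1 : α * β * ⟪(e : EuclideanSpace ℝ (Fin 3)), (e : EuclideanSpace ℝ (Fin 3))⟫ = 0 := by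
        have h := hc'd'
        rw [hαE, hβE, real_inner_smul_left, real_inner_smul_right, ← mul_assoc] at h
        rw [h]
        have hyv : -(x * y + y * v) = -(y * (x + v)) := by ring
        rw [hyv, hxv]
        simp
      have hαβ : α * β = 0 := (mul_eq_zero.mp h1).resolve_right hee
      have h2 : α * α * ⟪(e : EuclideanSpace ℝ (Fin 3)), (e : EuclideanSpace ℝ (Fin 3))⟫ =
          β * β * ⟪(e : EuclideanSpace ℝ (Fin 3)), (e : EuclideanSpace ℝ (Fin 3))⟫ := by
        have e1 := hc'c'
        have e2 := hd'd'
        rw [hαE, real_inner_smul_left, real_inner_smul_right, ← mul_assoc] at e1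
        rw [hβE, real_inner_smul_left, real_inner_smul_right, ← mul_assoc] at e2
        have hv2 : v = -x := by linarith
        rw [e1, e2, hcd, hv2]
        ring
      have hα2 : α * α = β * β := mul_right_cancel₀ hee h2
      have h4 : α ^ 4 = 0 := by
        calc α ^ 4 = (α * α) * (α * α) := by ring
        _ = (α * α) * (β * β) := by rw [hα2]
        _ = (α * β) * (α * β) := by ring
        _ = 0 := by rw [hαβ]; ring
      have hα0 : α = 0 := pow_eq_zero_iff (by norm_num : (4 : ℕ) ≠ 0) |>.mp h4
      have hβ0 : β = 0 := by
        have hbb2 : β * β = 0 := by rw [← hα2, hα0]; ring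
        exact mul_self_eq_zero.mp hbb2
      rw [hαE, hβE, hα0, hβ0]
      simp
    · -- q ≠ 0 : q spans the orthogonal line
      have hqW : q ∈ Sᗮ := by
        apply memW <;> rw [real_inner_comm] <;> assumption
      obtain ⟨γ, hγ⟩ := hgen ⟨q, hqW⟩
      have hγE : q = γ • (e : EuclideanSpace ℝ (Fin 3)) := by
        have := congrArg Subtype.val hγ
        simpa using this.symm
      have hγ0 : γ ≠ 0 := by
        intro h
        apply hq0
        rw [hγE, h, zero_smul]
      have hqc' : ⟪q, c'⟫ = 0 := by
        rw [hc'def]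
        simp only [inner_sub_right, real_inner_smul_right, hqa, hqb, hqc]
        ring
      have hqd' : ⟪q, d'⟫ = 0 := by
        rw [hd'def]
        simp only [inner_sub_right, real_inner_smul_right, hqa, hqb, hqd]
        ring
      have hα0 : α = 0 := by
        rw [hγE, hαE, real_inner_smul_left, real_inner_smul_right, ← mul_assoc] at hqc'
        rcases mul_eq_zero.mp hqc' with h | h
        · rcases mul_eq_zero.mp h with h | h
          · exact absurd h hγ0
          · exact h
        · exact absurd h hee
      have hβ0 : β = 0 := by
        rw [hγE, hβE, real_inner_smul_left, real_inner_smul_right, ← mul_assoc] at hqd'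
        rcases mul_eq_zero.mp hqd' with h | h
        · rcases mul_eq_zero.mp h with h | h
          · exact absurd h hγ0
          · exact h
        · exact absurd h hee
      rw [hαE, hβE, hα0, hβ0]
      simp
  -- conclude c, d ∈ S
  have hcS : c ∈ S := by
    have : c = (x / r2) • a + (y / r2) • b + c' := by rw [hc'def]; abel
    rw [this]
    exact Submodule.add_mem _ (Submodule.add_mem _ (Submodule.smul_mem _ _ haS)
      (Submodule.smul_mem _ _ hbS)) (by rw [hc'0.1]; exact Submodule.zero_mem _)
  have hdS : d ∈ S := by
    have : d = (y / r2) • a + (v / r2) • b + d' := by rw [hd'def]; abel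
    rw [this]
    exact Submodule.add_mem _ (Submodule.add_mem _ (Submodule.smul_mem _ _ haS)
      (Submodule.smul_mem _ _ hbS)) (by rw [hc'0.2]; exact Submodule.zero_mem _)
  -- finish by dimension count
  have hle : Submodule.span ℝ ({c, d} : Set (EuclideanSpace ℝ (Fin 3))) ≤ S :=
    Submodule.span_le.mpr (by rintro z (rfl | rfl) <;> assumption)
  have hrk : finrank ℝ (Submodule.span ℝ ({c, d} : Set (EuclideanSpace ℝ (Fin 3)))) = 2 :=
    aux_rank hc hcd hcdo
  exact (Submodule.eq_of_le_of_finrank_le hle (by rw [hdim, hrk])).symm
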